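/- Let n ≥ 2, let Γ be a group with subgroups K_0,…,K_n whose union generates Γ, let N be a normal subgroup of Γ, and let Λ be any group. If every group homomorphism from N to Λ is trivial and H^1(CC(Γ,{K_i}),Λ) = 0, then H^1(CC(Γ/N, {images of K_i in Γ/N}),Λ) = 0, i.e., every Λ-valued 1-cocycle on the coset complex of Γ/N with respect to the images of the K_i is a 1-coboundary. -/

import Mathlib

/-- The vertices of the coset complex `CC(Γ, {K_0,…,K_n})`: left cosets `gK_i`. -/
def ccVert {Γ : Type*} [Group Γ] {n : ℕ} (K : Fin (n + 1) → Subgroup Γ) :=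
  Σ i : Fin (n + 1), Γ ⧸ K i

/-- Two vertices of the coset complex are adjacent (span an edge) iff they have different
colors and the corresponding cosets intersect nontrivially; simplices of the coset complex
are sets of pairwise adjacent vertices. -/
def ccAdj {Γ : Type*} [Group Γ] {n : ℕ} (K : Fin (n + 1) → Subgroup Γ) :
    ccVert K → ccVert K → Prop := fun u v =>
  u.1 ≠ v.1 ∧ ∃ g : Γ,
    (QuotientGroup.mk g : Γ ⧸ K u.1) = u.2 ∧ (QuotientGroup.mk g : Γ ⧸ K v.1) = v.2

/-- `H¹(X, Λ) = 0` for the complex whose edges are given by `Adj` and whose `2`-simplices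
are the triples of pairwise adjacent vertices: every `Λ`-valued `1`-cocycle is a
`1`-coboundary. -/
def H1Trivial {V : Type*} (Adj : V → V → Prop) (Λ : Type*) [Group Λ] : Prop :=
  ∀ φ : V → V → Λ,
    (∀ u v, Adj u v → φ u v = (φ v u)⁻¹) →
    (∀ u v w, Adj u v → Adj v w → Adj u w → φ u v * φ v w * φ w u = 1) →
    ∃ ψ : V → Λ, ∀ u v, Adj u v → φ u v = ψ u * (ψ v)⁻¹


def ccQMap {Γ : Type*} [Group Γ] {n : ℕ} (K : Fin (n + 1) → Subgroup Γ)
    (N : Subgroup Γ) [N.Normal] (i : Fin (n + 1)) :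
    Γ ⧸ K i → (Γ ⧸ N) ⧸ (K i).map (QuotientGroup.mk' N) := fun q =>
  Quotient.liftOn' q (fun g => QuotientGroup.mk (QuotientGroup.mk' N g))
    (fun a b hab => by
      rw [QuotientGroup.leftRel_apply] at hab
      apply (QuotientGroup.eq).mpr
      simp only [← map_inv, ← map_mul]
      exact ⟨a⁻¹ * b, hab, rfl⟩)

theorem ccQMap_mk {Γ : Type*} [Group Γ] {n : ℕ} (K : Fin (n + 1) → Subgroup Γ)
    (N : Subgroup Γ) [N.Normal] (i : Fin (n + 1)) (g : Γ) :
    ccQMap K N i (QuotientGroup.mk g) = QuotientGroup.mk (QuotientGroup.mk' N g) := rfl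

theorem ccAdj_symm {Γ : Type*} [Group Γ] {n : ℕ} {K : Fin (n + 1) → Subgroup Γ} :
    Symmetric (ccAdj K) := fun u v ⟨hne, g, h1, h2⟩ => ⟨hne.symm, g, h2, h1⟩

/-- vertices with a common representative are connected -/
theorem ccConn_same {Γ : Type*} [Group Γ] {n : ℕ} (hn : 2 ≤ n) (K : Fin (n + 1) → Subgroup Γ)
    (g : Γ) (i j : Fin (n + 1)) :
    Relation.ReflTransGen (ccAdj K) ⟨i, QuotientGroup.mk g⟩ ⟨j, QuotientGroup.mk g⟩ := by
  rcases eq_or_ne i j with rfl | hne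
  · exact Relation.ReflTransGen.refl
  · exact Relation.ReflTransGen.single ⟨hne, g, rfl, rfl⟩

theorem ccConn {Γ : Type*} [Group Γ] {n : ℕ} (hn : 2 ≤ n) (K : Fin (n + 1) → Subgroup Γ)
    (hgen : Subgroup.closure (⋃ i, (K i : Set Γ)) = ⊤) (u v : ccVert K) :
    Relation.ReflTransGen (ccAdj K) u v := by
  obtain ⟨i, q⟩ := u
  obtain ⟨j, q'⟩ := v
  obtain ⟨g, rfl⟩ := QuotientGroup.mk_surjective q
  obtain ⟨g', rfl⟩ := QuotientGroup.mk_surjective q'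
  have key : ∀ x : Γ, x ∈ Subgroup.closure (⋃ i, (K i : Set Γ)) →
      ∀ (g : Γ) (i j : Fin (n+1)),
      Relation.ReflTransGen (ccAdj K) ⟨i, QuotientGroup.mk g⟩ ⟨j, QuotientGroup.mk (g * x)⟩ := by
    intro x hx
    induction hx using Subgroup.closure_induction with
    | mem x hx =>
      intro g i j
      obtain ⟨s, ⟨i0, rfl⟩, hxs⟩ := hx
      have e : (QuotientGroup.mk g : Γ ⧸ K i0) = QuotientGroup.mk (g * x) := by
        apply (QuotientGroup.eq).mpr
        simpa using hxs
      have p1 : Relation.ReflTransGen (ccAdj K) ⟨i, QuotientGroup.mk g⟩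
          ⟨i0, QuotientGroup.mk (g * x)⟩ := by
        have := ccConn_same hn K g i i0
        rwa [e] at this
      exact p1.trans (ccConn_same hn K (g * x) i0 j)
    | one => intro g i j; simpa using ccConn_same hn K g i j
    | mul x y hx hy ihx ihy =>
      intro g i j
      have := (ihx g i i).trans (ihy (g * x) i j)
      rwa [mul_assoc] at this
    | inv x hx ihx =>
      intro g i j
      have := ihx (g * x⁻¹) j i
      rw [inv_mul_cancel_right] at this
      exact (@Relation.ReflTransGen.symmetric _ _ ⟨fun a b h => ccAdj_symm h⟩).symm _ _ this
  have := key (g⁻¹ * g') (by rw [hgen]; trivial) g i j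
  rwa [mul_inv_cancel_left] at this

def ccAct {Γ : Type*} [Group Γ] {n : ℕ} {K : Fin (n + 1) → Subgroup Γ} (γ : Γ)
    (u : ccVert K) : ccVert K := ⟨u.1, γ • u.2⟩

def ccPi {Γ : Type*} [Group Γ] {n : ℕ} (K : Fin (n + 1) → Subgroup Γ)
    (N : Subgroup Γ) [N.Normal] (u : ccVert K) :
    ccVert (fun i => (K i).map (QuotientGroup.mk' N)) := ⟨u.1, ccQMap K N u.1 u.2⟩

theorem ccActAdj {Γ : Type*} [Group Γ] {n : ℕ} {K : Fin (n + 1) → Subgroup Γ} (γ : Γ)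
    {u v : ccVert K} (h : ccAdj K u v) : ccAdj K (ccAct γ u) (ccAct γ v) := by
  obtain ⟨i, q⟩ := u
  obtain ⟨j, q'⟩ := v
  obtain ⟨hne, g, h1, h2⟩ := h
  have h1' : (QuotientGroup.mk g : Γ ⧸ K i) = q := h1
  have h2' : (QuotientGroup.mk g : Γ ⧸ K j) = q' := h2
  refine ⟨hne, γ * g, ?_, ?_⟩
  · show (QuotientGroup.mk (γ * g) : Γ ⧸ K i) = γ • q
    rw [← h1']
    rfl
  · show (QuotientGroup.mk (γ * g) : Γ ⧸ K j) = γ • q'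
    rw [← h2']
    rfl

theorem ccPiAdj {Γ : Type*} [Group Γ] {n : ℕ} {K : Fin (n + 1) → Subgroup Γ}
    (N : Subgroup Γ) [N.Normal] {u v : ccVert K} (h : ccAdj K u v) :
    ccAdj (fun i => (K i).map (QuotientGroup.mk' N)) (ccPi K N u) (ccPi K N v) := by
  obtain ⟨i, q⟩ := u
  obtain ⟨j, q'⟩ := v
  obtain ⟨hne, g, h1, h2⟩ := h
  have h1' : (QuotientGroup.mk g : Γ ⧸ K i) = q := h1
  have h2' : (QuotientGroup.mk g : Γ ⧸ K j) = q' := h2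
  refine ⟨hne, QuotientGroup.mk' N g, ?_, ?_⟩
  · show _ = ccQMap K N i q
    rw [← h1']
    rfl
  · show _ = ccQMap K N j q'
    rw [← h2']
    rfl

theorem ccPiAct {Γ : Type*} [Group Γ] {n : ℕ} {K : Fin (n + 1) → Subgroup Γ}
    (N : Subgroup Γ) [N.Normal] {ν : Γ} (hν : ν ∈ N) (u : ccVert K) :
    ccPi K N (ccAct ν u) = ccPi K N u := by
  obtain ⟨i, q⟩ := u
  obtain ⟨x, rfl⟩ := QuotientGroup.mk_surjective q
  show (⟨i, ccQMap K N i (QuotientGroup.mk (ν * x))⟩ :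
      ccVert (fun i => (K i).map (QuotientGroup.mk' N)))
    = ⟨i, ccQMap K N i (QuotientGroup.mk x)⟩
  rw [ccQMap_mk, ccQMap_mk]
  congr 1
  rw [map_mul]
  have h1 : QuotientGroup.mk' N ν = 1 := (QuotientGroup.eq_one_iff ν).mpr hν
  rw [h1, one_mul]

theorem h1_trivial_quotient_cosetComplex {Γ : Type*} [Group Γ] (n : ℕ) (hn : 2 ≤ n)
    (K : Fin (n + 1) → Subgroup Γ)
    (hgen : Subgroup.closure (⋃ i, (K i : Set Γ)) = ⊤)
    (N : Subgroup Γ) [N.Normal]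
    (Λ : Type*) [Group Λ]
    (hN : ∀ f : N →* Λ, ∀ x, f x = 1)
    (hX : H1Trivial (ccAdj K) Λ) :
    H1Trivial (ccAdj fun i => (K i).map (QuotientGroup.mk' N)) Λ := by
  intro φ hsym htri
  obtain ⟨ψ, hψ⟩ := hX (fun u v => φ (ccPi K N u) (ccPi K N v))
    (fun u v h => hsym _ _ (ccPiAdj N h))
    (fun u v w h1 h2 h3 => htri _ _ _ (ccPiAdj N h1) (ccPiAdj N h2) (ccPiAdj N h3))
  set u0 : ccVert K := ⟨⟨0, Nat.succ_pos n⟩, QuotientGroup.mk 1⟩ with hu0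
  -- the "cocycle difference" along the N-action is constant on the (connected) complex
  have key : ∀ ν : Γ, ν ∈ N → ∀ u : ccVert K,
      (ψ (ccAct ν u))⁻¹ * ψ u = (ψ (ccAct ν u0))⁻¹ * ψ u0 := by
    intro ν hν u
    have edge : ∀ {a b : ccVert K}, ccAdj K a b →
        (ψ (ccAct ν a))⁻¹ * ψ a = (ψ (ccAct ν b))⁻¹ * ψ b := by
      intro a b hab
      have h1 : φ (ccPi K N a) (ccPi K N b) = ψ a * (ψ b)⁻¹ := hψ a b hab
      have h2 : φ (ccPi K N (ccAct ν a)) (ccPi K N (ccAct ν b))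
          = ψ (ccAct ν a) * (ψ (ccAct ν b))⁻¹ := hψ _ _ (ccActAdj ν hab)
      rw [ccPiAct N hν a, ccPiAct N hν b, h1] at h2
      calc (ψ (ccAct ν a))⁻¹ * ψ a
          = (ψ (ccAct ν a))⁻¹ * (ψ a * (ψ b)⁻¹) * ψ b := by group
        _ = (ψ (ccAct ν a))⁻¹ * (ψ (ccAct ν a) * (ψ (ccAct ν b))⁻¹) * ψ b := by rw [← h2]
        _ = (ψ (ccAct ν b))⁻¹ * ψ b := by group
    have walk : ∀ w : ccVert K, Relation.ReflTransGen (ccAdj K) u0 w →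
        (ψ (ccAct ν u0))⁻¹ * ψ u0 = (ψ (ccAct ν w))⁻¹ * ψ w := by
      intro w h
      induction h with
      | refl => rfl
      | tail _ he ih => exact ih.trans (edge he)
    exact (walk u (ccConn hn K hgen u0 u)).symm
  have hmul : ∀ ν μ : Γ, ν ∈ N → μ ∈ N →
      (ψ (ccAct (ν * μ) u0))⁻¹ * ψ u0
        = ((ψ (ccAct ν u0))⁻¹ * ψ u0) * ((ψ (ccAct μ u0))⁻¹ * ψ u0) := by
    intro ν μ hν hμ
    have h1 := key ν hν (ccAct μ u0)
    have e : ccAct ν (ccAct μ u0) = ccAct (ν * μ) u0 := by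
      show (⟨u0.1, ν • (μ • u0.2)⟩ : ccVert K) = ⟨u0.1, (ν * μ) • u0.2⟩
      rw [mul_smul]
    rw [e] at h1
    calc (ψ (ccAct (ν * μ) u0))⁻¹ * ψ u0
        = ((ψ (ccAct (ν * μ) u0))⁻¹ * ψ (ccAct μ u0)) * ((ψ (ccAct μ u0))⁻¹ * ψ u0) := by
          group
      _ = _ := by rw [h1]
  let f : N →* Λ :=
    { toFun := fun ν => (ψ (ccAct (ν : Γ) u0))⁻¹ * ψ u0
      map_one' := by
        have e : ccAct ((1 : N) : Γ) u0 = u0 := by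
          show (⟨u0.1, (1 : Γ) • u0.2⟩ : ccVert K) = u0
          rw [one_smul]
        show (ψ (ccAct ((1 : N) : Γ) u0))⁻¹ * ψ u0 = 1
        rw [e, inv_mul_cancel]
      map_mul' := fun ν μ => hmul (ν : Γ) (μ : Γ) ν.2 μ.2 }
  have triv : ∀ (ν : Γ), ν ∈ N → ∀ u : ccVert K, ψ (ccAct ν u) = ψ u := by
    intro ν hν u
    have h := key ν hν u
    have h2 : (ψ (ccAct ν u0))⁻¹ * ψ u0 = 1 := hN f ⟨ν, hν⟩
    rw [h2] at h
    exact inv_mul_eq_one.mp h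
  -- ψ is constant on fibers of the projection
  have fib : ∀ (i : Fin (n + 1)) (x x' : Γ),
      ccQMap K N i (QuotientGroup.mk x) = ccQMap K N i (QuotientGroup.mk x') →
      ψ ⟨i, QuotientGroup.mk x⟩ = ψ ⟨i, QuotientGroup.mk x'⟩ := by
    intro i x x' h
    rw [ccQMap_mk, ccQMap_mk] at h
    obtain ⟨k, hk, hk2⟩ := QuotientGroup.eq.mp h
    have hm : x⁻¹ * x' * k⁻¹ ∈ N := by
      have h1 : QuotientGroup.mk' N (x⁻¹ * x' * k⁻¹) = 1 := by
        rw [map_mul, map_mul, map_inv, map_inv, hk2]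
        group
      exact (QuotientGroup.eq_one_iff _).mp h1
    have hν : x * (x⁻¹ * x' * k⁻¹) * x⁻¹ ∈ N :=
      Subgroup.Normal.conj_mem ‹N.Normal› _ hm x
    have e1 : ccAct (x * (x⁻¹ * x' * k⁻¹) * x⁻¹) (⟨i, QuotientGroup.mk x⟩ : ccVert K)
        = (⟨i, QuotientGroup.mk x'⟩ : ccVert K) := by
      show (⟨i, QuotientGroup.mk (x * (x⁻¹ * x' * k⁻¹) * x⁻¹ * x)⟩ : ccVert K)
        = ⟨i, QuotientGroup.mk x'⟩
      congr 1
      apply QuotientGroup.eq.mpr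
      have e2 : (x * (x⁻¹ * x' * k⁻¹) * x⁻¹ * x)⁻¹ * x' = k := by group
      rw [e2]
      exact hk
    rw [← e1]
    exact (triv _ hν _).symm
  -- choose a section and push ψ down
  have sec : ∀ a : ccVert (fun i => (K i).map (QuotientGroup.mk' N)),
      ∃ g : Γ, ccQMap K N a.1 (QuotientGroup.mk g) = a.2 := by
    rintro ⟨i, q⟩
    obtain ⟨gb, rfl⟩ := QuotientGroup.mk_surjective q
    obtain ⟨g, rfl⟩ := QuotientGroup.mk_surjective gb
    exact ⟨g, rfl⟩
  choose s hs using sec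
  refine ⟨fun a => ψ ⟨a.1, QuotientGroup.mk (s a)⟩, ?_⟩
  rintro ⟨ia, qa⟩ ⟨ib, qb⟩ ⟨hne, gb, h1, h2⟩
  obtain ⟨g, rfl⟩ := QuotientGroup.mk_surjective gb
  have hqa : ccQMap K N ia (QuotientGroup.mk g) = qa := h1
  have hqb : ccQMap K N ib (QuotientGroup.mk g) = qb := h2
  have huv : ccAdj K ⟨ia, QuotientGroup.mk g⟩ ⟨ib, QuotientGroup.mk g⟩ := ⟨hne, g, rfl, rfl⟩
  have h3 : φ (ccPi K N ⟨ia, QuotientGroup.mk g⟩) (ccPi K N ⟨ib, QuotientGroup.mk g⟩)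
      = ψ ⟨ia, QuotientGroup.mk g⟩ * (ψ ⟨ib, QuotientGroup.mk g⟩)⁻¹ := hψ _ _ huv
  have ea : ψ (⟨ia, QuotientGroup.mk g⟩ : ccVert K)
      = ψ ⟨ia, QuotientGroup.mk (s ⟨ia, qa⟩)⟩ :=
    fib ia g _ (hqa.trans (hs ⟨ia, qa⟩).symm)
  have eb : ψ (⟨ib, QuotientGroup.mk g⟩ : ccVert K)
      = ψ ⟨ib, QuotientGroup.mk (s ⟨ib, qb⟩)⟩ :=
    fib ib g _ (hqb.trans (hs ⟨ib, qb⟩).symm)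
  have e4 : (⟨ia, qa⟩ : ccVert (fun i => (K i).map (QuotientGroup.mk' N)))
      = ccPi K N ⟨ia, QuotientGroup.mk g⟩ := by
    show _ = (⟨ia, ccQMap K N ia (QuotientGroup.mk g)⟩ :
      ccVert (fun i => (K i).map (QuotientGroup.mk' N)))
    rw [hqa]
  have e5 : (⟨ib, qb⟩ : ccVert (fun i => (K i).map (QuotientGroup.mk' N)))
      = ccPi K N ⟨ib, QuotientGroup.mk g⟩ := by
    show _ = (⟨ib, ccQMap K N ib (QuotientGroup.mk g)⟩ :
      ccVert (fun i => (K i).map (QuotientGroup.mk' N)))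
    rw [hqb]
  conv_lhs => rw [e4, e5]
  rw [h3, ea, eb]
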